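/- arXiv:1011.6429 — 4 statements merged into one kernel-verified Lean document; each statement's English description precedes it below -/
import Mathlib

section
/- BPA*01 is less expressive than PA*01 modulo bisimilarity: every BPA*01 expression is bisimilar to a PA*01 expression, and there exists a PA*01 expression (for instance ε·(a·b)*‖c, where a, b, c are distinct actions) that is not bisimilar to any BPA*01 expression. -/
/-- PA*01 expressions over an action set `Act`. -/
inductive PExpr (Act : Type) : Type
  | dl : PExpr Act
  | emp : PExpr Act
  | act : Act → PExpr Act
  | seq : PExpr Act → PExpr Act → PExpr Act
  | alt : PExpr Act → PExpr Act → PExpr Act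
  | star : PExpr Act → PExpr Act
  | par : PExpr Act → PExpr Act → PExpr Act

variable {Act : Type}

/-- The termination predicate `↓` of PA*01. -/
inductive PTerm : PExpr Act → Prop
  | emp : PTerm PExpr.emp
  | altl {p q : PExpr Act} : PTerm p → PTerm (PExpr.alt p q)
  | altr {p q : PExpr Act} : PTerm q → PTerm (PExpr.alt p q)
  | seq {p q : PExpr Act} : PTerm p → PTerm q → PTerm (PExpr.seq p q)
  | star {p : PExpr Act} : PTerm (PExpr.star p)
  | par {p q : PExpr Act} : PTerm p → PTerm q → PTerm (PExpr.par p q)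

/-- The transition relation `p →a p'` of PA*01 (pure interleaving). -/
inductive PStep : PExpr Act → Act → PExpr Act → Prop
  | act {a : Act} : PStep (PExpr.act a) a PExpr.emp
  | altl {p q p' : PExpr Act} {a : Act} : PStep p a p' → PStep (PExpr.alt p q) a p'
  | altr {p q q' : PExpr Act} {a : Act} : PStep q a q' → PStep (PExpr.alt p q) a q'
  | seql {p q p' : PExpr Act} {a : Act} :
      PStep p a p' → PStep (PExpr.seq p q) a (PExpr.seq p' q)
  | seqr {p q q' : PExpr Act} {a : Act} :
      PTerm p → PStep q a q' → PStep (PExpr.seq p q) a q'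
  | star {p p' : PExpr Act} {a : Act} :
      PStep p a p' → PStep (PExpr.star p) a (PExpr.seq p' (PExpr.star p))
  | parl {p q p' : PExpr Act} {a : Act} :
      PStep p a p' → PStep (PExpr.par p q) a (PExpr.par p' q)
  | parr {p q q' : PExpr Act} {a : Act} :
      PStep q a q' → PStep (PExpr.par p q) a (PExpr.par p q')

/-- `p → p'`: a transition with some label. -/
def PStepAny (p q : PExpr Act) : Prop := ∃ a, PStep p a q

/-- `p →* p'`: reachability. -/
def PReach (p q : PExpr Act) : Prop := Relation.ReflTransGen PStepAny p q

/-- `p` is normed: some terminating expression is reachable from `p`. -/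
def PNormed (p : PExpr Act) : Prop := ∃ q, PReach p q ∧ PTerm q

/-- A strongly connected component: a maximal set of mutually reachable states. -/
def IsSCC (C : Set (PExpr Act)) : Prop :=
  (∀ s ∈ C, ∀ t ∈ C, PReach s t) ∧
    ∀ D : Set (PExpr Act), C ⊆ D → (∀ s ∈ D, ∀ t ∈ D, PReach s t) → D = C

/-- A trivial SCC: a singleton `{s}` with no transition `s → s`. -/
def IsTrivialSCC (C : Set (PExpr Act)) : Prop := ∃ s, C = {s} ∧ ¬ PStepAny s s

/-- `C · q = { p · q | p ∈ C }`. -/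
def seqSet (C : Set (PExpr Act)) (q : PExpr Act) : Set (PExpr Act) :=
  (fun p => PExpr.seq p q) '' C

/-- `C₁ ‖ C₂ = { p ‖ q | p ∈ C₁, q ∈ C₂ }`. -/
def parSet (C₁ C₂ : Set (PExpr Act)) : Set (PExpr Act) :=
  Set.image2 PExpr.par C₁ C₂

/-- A basic SCC: `C = C' · q*` for some set `C'` that is not an SCC. -/
def IsBasic (C : Set (PExpr Act)) : Prop :=
  ∃ (C' : Set (PExpr Act)) (q : PExpr Act), C = seqSet C' (PExpr.star q) ∧ ¬ IsSCC C'

/-- The set `Extⁿ(s)` of normed exit transitions from `s`, w.r.t. the SCC `C`. -/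
def ExtN (C : Set (PExpr Act)) (s : PExpr Act) : Set (Act × PExpr Act) :=
  {e | PStep s e.1 e.2 ∧ e.2 ∉ C ∧ PNormed e.2}

/-- `s ∈ C` is an alive exit state if `s↓` or `s` has a normed exit transition. -/
def AliveExit (C : Set (PExpr Act)) (s : PExpr Act) : Prop :=
  s ∈ C ∧ (PTerm s ∨ ∃ e, e ∈ ExtN C s)

/-- `E · q = { (a, r · q) | (a, r) ∈ E }`. -/
def extSeq (E : Set (Act × PExpr Act)) (q : PExpr Act) : Set (Act × PExpr Act) :=
  (fun e => (e.1, PExpr.seq e.2 q)) '' E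

/-- `E ‖ q = { (a, r ‖ q) | (a, r) ∈ E }`. -/
def extParL (E : Set (Act × PExpr Act)) (q : PExpr Act) : Set (Act × PExpr Act) :=
  (fun e => (e.1, PExpr.par e.2 q)) '' E

/-- `p ‖ E = { (a, p ‖ r) | (a, r) ∈ E }`. -/
def extParR (p : PExpr Act) (E : Set (Act × PExpr Act)) : Set (Act × PExpr Act) :=
  (fun e => (e.1, PExpr.par p e.2)) '' E

/-- `s` and `s'` belong to the same strongly connected component. -/
def SameSCC (s s' : PExpr Act) : Prop := ∃ C : Set (PExpr Act), IsSCC C ∧ s ∈ C ∧ s' ∈ C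

/-- The equivalence `∼` on exit transitions: same action, targets in the same SCC. -/
def ExitEquiv (e e' : Act × PExpr Act) : Prop := e.1 = e'.1 ∧ SameSCC e.2 e'.2

/-- Is the expression a star expression? -/
def isStarP : PExpr Act → Bool
  | PExpr.star _ => true
  | _ => false

/-- The measure `OC` on PA*01 expressions. -/
def OC : PExpr Act → ℕ
  | PExpr.dl => 0
  | PExpr.emp => 0
  | PExpr.act _ => 1
  | PExpr.seq _ q => if isStarP q then 0 else OC q + 1
  | PExpr.alt p q => max (OC p) (OC q) + 1
  | PExpr.star _ => 1
  | PExpr.par _ _ => 0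

/-- A PA*01 expression without occurrences of `‖` is a BPA*01 expression. -/
def NoPar : PExpr Act → Prop
  | PExpr.dl => True
  | PExpr.emp => True
  | PExpr.act _ => True
  | PExpr.seq p q => NoPar p ∧ NoPar q
  | PExpr.alt p q => NoPar p ∧ NoPar q
  | PExpr.star p => NoPar p
  | PExpr.par _ _ => False

/-- Bisimulations on PA*01 expressions. -/
def IsBisimulation (R : PExpr Act → PExpr Act → Prop) : Prop :=
  ∀ p q, R p q →
    (∀ a p', PStep p a p' → ∃ q', PStep q a q' ∧ R p' q') ∧
    (∀ a q', PStep q a q' → ∃ p', PStep p a p' ∧ R p' q') ∧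
    (PTerm p ↔ PTerm q)

/-- Bisimilarity of PA*01 expressions. -/
def Bisimilar (p q : PExpr Act) : Prop :=
  ∃ R : PExpr Act → PExpr Act → Prop, IsBisimulation R ∧ R p q

/-! ### Auxiliary development -/

section Aux
variable {Act : Type}

lemma term_seq_iff {p q : PExpr Act} : PTerm (PExpr.seq p q) ↔ PTerm p ∧ PTerm q := by
  constructor
  · intro h; cases h with | seq h1 h2 => exact ⟨h1, h2⟩
  · rintro ⟨h1, h2⟩; exact PTerm.seq h1 h2

lemma nopar_step {p p' : PExpr Act} {x : Act} (h : PStep p x p') (hp : NoPar p) : NoPar p' := by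
  induction h with
  | act => trivial
  | altl h ih => exact ih hp.1
  | altr h ih => exact ih hp.2
  | seql h ih => exact ⟨ih hp.1, hp.2⟩
  | seqr h1 h2 ih => exact ih hp.2
  | star h ih => exact ⟨ih hp, hp⟩
  | parl h ih => exact hp.elim
  | parr h ih => exact hp.elim

lemma bisimilar_refl (p : PExpr Act) : Bisimilar p p := by
  refine ⟨Eq, ?_, rfl⟩
  intro u v huv; subst huv
  exact ⟨fun a p' h => ⟨p', h, rfl⟩, fun a q' h => ⟨q', h, rfl⟩, Iff.rfl⟩

lemma bisimilar_symm {p q : PExpr Act} (h : Bisimilar p q) : Bisimilar q p := by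
  obtain ⟨R, hR, hpq⟩ := h
  refine ⟨fun u v => R v u, ?_, hpq⟩
  intro u v huv
  obtain ⟨h1, h2, h3⟩ := hR v u huv
  exact ⟨fun a p' hs => h2 a p' hs, fun a q' hs => h1 a q' hs, h3.symm⟩

lemma oc_mono {p p' : PExpr Act} {x : Act} (h : PStep p x p') : OC p' ≤ OC p := by
  induction h with
  | act => simp [OC]
  | @altl p q p' a h ih =>
      simp only [OC]
      exact le_trans ih (by omega)
  | @altr p q q' a h ih =>
      simp only [OC]
      exact le_trans ih (by omega)
  | seql h ih => simp [OC]
  | @seqr p q q' a h1 h2 ih =>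
      cases q with
      | star s =>
          cases h2 with
          | star hs => simp [OC, isStarP]
      | dl => simp only [OC, isStarP, Bool.false_eq_true, reduceIte] at ih ⊢; omega
      | emp => simp only [OC, isStarP, Bool.false_eq_true, reduceIte] at ih ⊢; omega
      | act d => simp only [OC, isStarP, Bool.false_eq_true, reduceIte] at ih ⊢; omega
      | seq u v => simp only [OC, isStarP, Bool.false_eq_true, reduceIte] at ih ⊢; omega
      | alt u v => simp only [OC, isStarP, Bool.false_eq_true, reduceIte] at ih ⊢; omega
      | par u v => simp only [OC, isStarP, Bool.false_eq_true, reduceIte] at ih ⊢; omega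
  | star h ih => simp [OC, isStarP]
  | parl h ih => simp [OC]
  | parr h ih => simp [OC]

lemma step_structure {u v : PExpr Act} {x : Act} (hnp : NoPar u) (hnt : ¬ PTerm u)
    (h : PStep u x v) (hoc : OC u ≤ OC v) :
    ∃ p t p', u = PExpr.seq p t ∧ v = PExpr.seq p' t ∧ PStep p x p' := by
  cases u with
  | dl => nomatch h
  | emp => nomatch h
  | act d =>
      cases h with
      | act => simp [OC] at hoc
  | alt p q =>
      cases h with
      | altl hs => have := oc_mono hs; simp only [OC] at hoc; omega
      | altr hs => have := oc_mono hs; simp only [OC] at hoc; omega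
  | star p => exact absurd PTerm.star hnt
  | par p q => exact hnp.elim
  | seq p t =>
      cases h with
      | seql hs => exact ⟨p, t, _, rfl, rfl, hs⟩
      | seqr h1 h2 =>
          cases t with
          | star s => exact absurd (PTerm.seq h1 PTerm.star) hnt
          | dl => nomatch h2
          | emp => nomatch h2
          | act d =>
              have := oc_mono h2
              simp only [OC, isStarP, Bool.false_eq_true, reduceIte] at this hoc; omega
          | seq w1 w2 =>
              have := oc_mono h2
              simp only [OC, isStarP, Bool.false_eq_true, reduceIte] at this hoc; omega
          | alt w1 w2 =>
              have := oc_mono h2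
              simp only [OC, isStarP, Bool.false_eq_true, reduceIte] at this hoc; omega
          | par w1 w2 =>
              have := oc_mono h2
              simp only [OC, isStarP, Bool.false_eq_true, reduceIte] at this hoc; omega

/-- Plugging an expression into a list of sequential "tails". -/
def plug (p : PExpr Act) (L : List (PExpr Act)) : PExpr Act := L.foldl PExpr.seq p

@[simp] lemma plug_nil (p : PExpr Act) : plug p [] = p := rfl

lemma plug_cons (p t : PExpr Act) (L : List (PExpr Act)) :
    plug p (t :: L) = plug (PExpr.seq p t) L := rfl

lemma plug_step {p p' : PExpr Act} {x : Act} (h : PStep p x p') (L : List (PExpr Act)) :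
    PStep (plug p L) x (plug p' L) := by
  induction L generalizing p p' with
  | nil => exact h
  | cons t L ih => exact ih (PStep.seql h)

lemma plug_term_iff (p : PExpr Act) (L : List (PExpr Act)) :
    PTerm (plug p L) ↔ PTerm p ∧ ∀ t ∈ L, PTerm t := by
  induction L generalizing p with
  | nil => simp [plug]
  | cons t L ih =>
      rw [plug_cons, ih, term_seq_iff]
      simp only [List.mem_cons]
      constructor
      · rintro ⟨⟨h1, h2⟩, h3⟩
        exact ⟨h1, by rintro s (rfl | hs); exact h2; exact h3 s hs⟩
      · rintro ⟨h1, h2⟩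
        exact ⟨⟨h1, h2 t (Or.inl rfl)⟩, fun s hs => h2 s (Or.inr hs)⟩

lemma plug_step_inv {p v : PExpr Act} {x : Act} {L : List (PExpr Act)}
    (hL : ∀ t ∈ L, PTerm t) (hnt : ¬ PTerm p) (h : PStep (plug p L) x v) :
    ∃ p', PStep p x p' ∧ v = plug p' L := by
  induction L generalizing p with
  | nil => exact ⟨v, h, rfl⟩
  | cons t L ih =>
      rw [plug_cons] at h
      have hnt' : ¬ PTerm (PExpr.seq p t) := fun hh => hnt (term_seq_iff.1 hh).1
      obtain ⟨z, hz, rfl⟩ := ih (fun s hs => hL s (List.mem_cons_of_mem _ hs)) hnt' h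
      cases hz with
      | seql hs => exact ⟨_, hs, rfl⟩
      | seqr h1 h2 => exact absurd h1 hnt

end Aux

section Aux2
variable {Act : Type}

/-- A step-closed finite over-approximation of the reachable states. -/
def Gam : PExpr Act → Set (PExpr Act)
  | PExpr.dl => {PExpr.dl}
  | PExpr.emp => {PExpr.emp}
  | PExpr.act x => {PExpr.act x, PExpr.emp}
  | PExpr.alt p q => insert (PExpr.alt p q) (Gam p ∪ Gam q)
  | PExpr.seq p q => ((fun w => PExpr.seq w q) '' Gam p) ∪ Gam q
  | PExpr.star p => insert (PExpr.star p) ((fun w => PExpr.seq w (PExpr.star p)) '' Gam p)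
  | PExpr.par p q => Set.image2 PExpr.par (Gam p) (Gam q)

lemma mem_Gam_self : ∀ u : PExpr Act, u ∈ Gam u := by
  intro u
  induction u with
  | dl => exact rfl
  | emp => exact rfl
  | act x => exact Or.inl rfl
  | alt p q ih1 ih2 => exact Set.mem_insert _ _
  | seq p q ih1 ih2 => exact Or.inl ⟨p, ih1, rfl⟩
  | star p ih => exact Set.mem_insert _ _
  | par p q ih1 ih2 => exact ⟨p, ih1, q, ih2, rfl⟩

lemma Gam_finite : ∀ u : PExpr Act, (Gam u).Finite := by
  intro u
  induction u with
  | dl => exact Set.finite_singleton _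
  | emp => exact Set.finite_singleton _
  | act x => exact (Set.finite_singleton _).insert _
  | alt p q ih1 ih2 => exact ((ih1.union ih2).insert _)
  | seq p q ih1 ih2 => exact (ih1.image _).union ih2
  | star p ih => exact ((ih.image _).insert _)
  | par p q ih1 ih2 => exact ih1.image2 _ ih2

lemma Gam_closed : ∀ u : PExpr Act, ∀ v ∈ Gam u, ∀ x w, PStep v x w → w ∈ Gam u := by
  intro u
  induction u with
  | dl => rintro v rfl x w h; nomatch h
  | emp => rintro v rfl x w h; nomatch h
  | act d =>
      rintro v (rfl | rfl) x w h
      · cases h; exact Or.inr rfl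
      · nomatch h
  | alt p q ih1 ih2 =>
      rintro v (rfl | hv | hv) x w h
      · cases h with
        | altl hs => exact Or.inr (Or.inl (ih1 p (mem_Gam_self p) x w hs))
        | altr hs => exact Or.inr (Or.inr (ih2 q (mem_Gam_self q) x w hs))
      · exact Or.inr (Or.inl (ih1 v hv x w h))
      · exact Or.inr (Or.inr (ih2 v hv x w h))
  | seq p q ih1 ih2 =>
      rintro v (⟨v', hv', rfl⟩ | hv) x w h
      · cases h with
        | seql hs => exact Or.inl ⟨_, ih1 v' hv' x _ hs, rfl⟩
        | seqr h1 h2 => exact Or.inr (ih2 q (mem_Gam_self q) x w h2)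
      · exact Or.inr (ih2 v hv x w h)
  | star p ih =>
      rintro v (rfl | ⟨v', hv', rfl⟩) x w h
      · cases h with
        | star hs => exact Or.inr ⟨_, ih p (mem_Gam_self p) x _ hs, rfl⟩
      · cases h with
        | seql hs => exact Or.inr ⟨_, ih v' hv' x _ hs, rfl⟩
        | seqr h1 h2 =>
            cases h2 with
            | star hs => exact Or.inr ⟨_, ih p (mem_Gam_self p) x _ hs, rfl⟩
  | par p q ih1 ih2 =>
      rintro v ⟨v1, hv1, v2, hv2, rfl⟩ x w h
      · cases h with
        | parl hs => exact ⟨_, ih1 v1 hv1 x _ hs, _, hv2, rfl⟩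
        | parr hs => exact ⟨_, hv1, _, ih2 v2 hv2 x _ hs, rfl⟩

lemma exists_chain {α : Type} (Inv : α → Prop) (Rel : α → α → Prop)
    (hnext : ∀ u, Inv u → ∃ v, Rel u v ∧ Inv v) (u0 : α) (h0 : Inv u0) :
    ∃ f : ℕ → α, f 0 = u0 ∧ ∀ n, Inv (f n) ∧ Rel (f n) (f (n + 1)) := by
  choose F hF1 hF2 using hnext
  let g : ℕ → {u : α // Inv u} := fun n =>
    Nat.rec ⟨u0, h0⟩ (fun _ p => ⟨F p.1 p.2, hF2 p.1 p.2⟩) n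
  refine ⟨fun n => (g n).1, rfl, fun n => ⟨(g n).2, ?_⟩⟩
  exact hF1 (g n).1 (g n).2

end Aux2

section Concrete
variable {Act : Type}

/-- `(a·b)*` -/
def sAB (a b : Act) : PExpr Act := PExpr.star (PExpr.seq (PExpr.act a) (PExpr.act b))
/-- `ε·(a·b)*` -/
def s0 (a b : Act) : PExpr Act := PExpr.seq PExpr.emp (sAB a b)
/-- `(ε·b)·(a·b)*` -/
def s1 (a b : Act) : PExpr Act := PExpr.seq (PExpr.seq PExpr.emp (PExpr.act b)) (sAB a b)
def EA (a b c : Act) : PExpr Act := PExpr.par (s0 a b) (PExpr.act c)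
def EB (a b c : Act) : PExpr Act := PExpr.par (s1 a b) (PExpr.act c)
def EC0 (a b : Act) : PExpr Act := PExpr.par (s0 a b) PExpr.emp
def EC1 (a b : Act) : PExpr Act := PExpr.par (s1 a b) PExpr.emp

variable {a b c : Act}

lemma step_s0 {x : Act} {v : PExpr Act} (h : PStep (s0 a b) x v) : x = a ∧ v = s1 a b := by
  cases h with
  | seql hs => nomatch hs
  | seqr h1 h2 =>
      cases h2 with
      | star hs =>
          cases hs with
          | seql hs' => cases hs'; exact ⟨rfl, rfl⟩
          | seqr h3 h4 => nomatch h3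

lemma step_s1 {x : Act} {v : PExpr Act} (h : PStep (s1 a b) x v) : x = b ∧ v = s0 a b := by
  cases h with
  | seql hs =>
      cases hs with
      | seql hs' => nomatch hs'
      | seqr h1 h2 => cases h2; exact ⟨rfl, rfl⟩
  | seqr h1 h2 =>
      exact absurd h1 (by intro hh; rcases term_seq_iff.1 hh with ⟨-, h3⟩; nomatch h3)

lemma term_s0 : PTerm (s0 a b) := PTerm.seq PTerm.emp PTerm.star

lemma not_term_s1 : ¬ PTerm (s1 a b) := by
  intro h; rcases term_seq_iff.1 h with ⟨h1, -⟩
  rcases term_seq_iff.1 h1 with ⟨-, h2⟩; nomatch h2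

lemma s0_step : PStep (s0 a b) a (s1 a b) :=
  PStep.seqr PTerm.emp (PStep.star (PStep.seql PStep.act))

lemma s1_step : PStep (s1 a b) b (s0 a b) :=
  PStep.seql (PStep.seqr PTerm.emp PStep.act)

lemma step_EA {x : Act} {v : PExpr Act} (h : PStep (EA a b c) x v) :
    (x = a ∧ v = EB a b c) ∨ (x = c ∧ v = EC0 a b) := by
  cases h with
  | parl hs => rcases step_s0 hs with ⟨rfl, rfl⟩; exact Or.inl ⟨rfl, rfl⟩
  | parr hs => cases hs; exact Or.inr ⟨rfl, rfl⟩

lemma step_EB {x : Act} {v : PExpr Act} (h : PStep (EB a b c) x v) :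
    (x = b ∧ v = EA a b c) ∨ (x = c ∧ v = EC1 a b) := by
  cases h with
  | parl hs => rcases step_s1 hs with ⟨rfl, rfl⟩; exact Or.inl ⟨rfl, rfl⟩
  | parr hs => cases hs; exact Or.inr ⟨rfl, rfl⟩

lemma step_EC1 {x : Act} {v : PExpr Act} (h : PStep (EC1 a b) x v) :
    x = b ∧ v = EC0 a b := by
  cases h with
  | parl hs => rcases step_s1 hs with ⟨rfl, rfl⟩; exact ⟨rfl, rfl⟩
  | parr hs => nomatch hs

lemma EA_step_a : PStep (EA a b c) a (EB a b c) := PStep.parl s0_step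
lemma EA_step_c : PStep (EA a b c) c (EC0 a b) := PStep.parr PStep.act
lemma EB_step_b : PStep (EB a b c) b (EA a b c) := PStep.parl s1_step
lemma EB_step_c : PStep (EB a b c) c (EC1 a b) := PStep.parr PStep.act
lemma EC1_step_b : PStep (EC1 a b) b (EC0 a b) := PStep.parl s1_step

lemma not_term_EA : ¬ PTerm (EA a b c) := by
  intro h; cases h with | par h1 h2 => nomatch h2
lemma not_term_EB : ¬ PTerm (EB a b c) := by
  intro h; cases h with | par h1 h2 => nomatch h2
lemma term_EC0 : PTerm (EC0 a b) := PTerm.par term_s0 PTerm.emp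
lemma not_term_EC1 : ¬ PTerm (EC1 a b) := by
  intro h; cases h with | par h1 h2 => exact not_term_s1 h1

/-- bisimilar to `ε·(ab)* ‖ c` -/
def GA (a b c : Act) (u : PExpr Act) : Prop := Bisimilar u (EA a b c)
def GB (a b c : Act) (u : PExpr Act) : Prop := Bisimilar u (EB a b c)
def GC0 (a b : Act) (u : PExpr Act) : Prop := Bisimilar u (EC0 a b)
def GC1 (a b : Act) (u : PExpr Act) : Prop := Bisimilar u (EC1 a b)

lemma GA_spec {u : PExpr Act} (h : GA a b c u) :
    ¬ PTerm u ∧ (∃ v, PStep u a v ∧ GB a b c v) ∧ (∃ v, PStep u c v ∧ GC0 a b v) ∧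
      (∀ x v, PStep u x v → (x = a ∧ GB a b c v) ∨ (x = c ∧ GC0 a b v)) := by
  obtain ⟨R, hR, hr⟩ := h
  obtain ⟨hfwd, hbwd, hterm⟩ := hR u (EA a b c) hr
  refine ⟨fun ht => not_term_EA (hterm.1 ht), ?_, ?_, ?_⟩
  · obtain ⟨v, hv, hrv⟩ := hbwd a (EB a b c) EA_step_a
    exact ⟨v, hv, R, hR, hrv⟩
  · obtain ⟨v, hv, hrv⟩ := hbwd c (EC0 a b) EA_step_c
    exact ⟨v, hv, R, hR, hrv⟩
  · intro x v hs
    obtain ⟨q', hq', hrq⟩ := hfwd x v hs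
    rcases step_EA hq' with ⟨rfl, rfl⟩ | ⟨rfl, rfl⟩
    · exact Or.inl ⟨rfl, R, hR, hrq⟩
    · exact Or.inr ⟨rfl, R, hR, hrq⟩

lemma GB_spec {u : PExpr Act} (h : GB a b c u) :
    ¬ PTerm u ∧ (∃ v, PStep u b v ∧ GA a b c v) ∧ (∃ v, PStep u c v ∧ GC1 a b v) ∧
      (∀ x v, PStep u x v → (x = b ∧ GA a b c v) ∨ (x = c ∧ GC1 a b v)) := by
  obtain ⟨R, hR, hr⟩ := h
  obtain ⟨hfwd, hbwd, hterm⟩ := hR u (EB a b c) hr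
  refine ⟨fun ht => not_term_EB (hterm.1 ht), ?_, ?_, ?_⟩
  · obtain ⟨v, hv, hrv⟩ := hbwd b (EA a b c) EB_step_b
    exact ⟨v, hv, R, hR, hrv⟩
  · obtain ⟨v, hv, hrv⟩ := hbwd c (EC1 a b) EB_step_c
    exact ⟨v, hv, R, hR, hrv⟩
  · intro x v hs
    obtain ⟨q', hq', hrq⟩ := hfwd x v hs
    rcases step_EB hq' with ⟨rfl, rfl⟩ | ⟨rfl, rfl⟩
    · exact Or.inl ⟨rfl, R, hR, hrq⟩
    · exact Or.inr ⟨rfl, R, hR, hrq⟩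

lemma GC0_spec {u : PExpr Act} (h : GC0 a b u) : PTerm u := by
  obtain ⟨R, hR, hr⟩ := h
  exact ((hR u (EC0 a b) hr).2.2).2 term_EC0

lemma GC1_spec {u : PExpr Act} (h : GC1 a b u) :
    ¬ PTerm u ∧ (∃ v, PStep u b v ∧ GC0 a b v) ∧
      (∀ x v, PStep u x v → x = b ∧ GC0 a b v) := by
  obtain ⟨R, hR, hr⟩ := h
  obtain ⟨hfwd, hbwd, hterm⟩ := hR u (EC1 a b) hr
  refine ⟨fun ht => not_term_EC1 (hterm.1 ht), ?_, ?_⟩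
  · obtain ⟨v, hv, hrv⟩ := hbwd b (EC0 a b) EC1_step_b
    exact ⟨v, hv, R, hR, hrv⟩
  · intro x v hs
    obtain ⟨q', hq', hrq⟩ := hfwd x v hs
    rcases step_EC1 hq' with ⟨rfl, rfl⟩
    exact ⟨rfl, R, hR, hrq⟩

end Concrete

section Main
variable {Act : Type}

/-- Head of a sequential composition. -/
def hd : PExpr Act → PExpr Act
  | PExpr.seq p _ => p
  | u => u

lemma no_cycle {a b c : Act} (hab : a ≠ b) (hbc : b ≠ c) :
    ∀ N : ℕ, ∀ (g : ℕ → PExpr Act) (L : List (PExpr Act)) (i j : ℕ),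
      sizeOf (g i) ≤ N → i < j → g i = g j →
      (∀ t ∈ L, PTerm t ∧ NoPar t) →
      (∀ k, i ≤ k → k < j → ∃ x, PStep (g k) x (g (k + 1))) →
      (∀ k, i ≤ k → k ≤ j →
        (GA a b c (plug (g k) L) ∨ GB a b c (plug (g k) L)) ∧ NoPar (g k)) →
      False := by
  intro N
  induction N using Nat.strong_induction_on with
  | _ N IH =>
  intro g L i j hsize hij hgij hL hsteps hGAB
  have hLT : ∀ t ∈ L, PTerm t := fun t ht => (hL t ht).1
  have hnt : ∀ k, i ≤ k → k ≤ j → ¬ PTerm (g k) := by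
    intro k h1 h2 ht
    have hplug : PTerm (plug (g k) L) := (plug_term_iff _ _).2 ⟨ht, hLT⟩
    rcases (hGAB k h1 h2).1 with hA | hB
    · exact (GA_spec hA).1 hplug
    · exact (GB_spec hB).1 hplug
  have hocle : ∀ k l, i ≤ k → k ≤ l → l ≤ j → OC (g l) ≤ OC (g k) := by
    intro k l hik hkl
    induction l, hkl using Nat.le_induction with
    | base => intro _; exact le_rfl
    | succ l hkl ih =>
        intro hlj
        have hlj' : l < j := hlj
        obtain ⟨x, hx⟩ := hsteps l (le_trans hik hkl) hlj'
        exact le_trans (oc_mono hx) (ih (le_of_lt hlj'))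
  have hoceq : ∀ k, i ≤ k → k ≤ j → OC (g k) = OC (g i) := by
    intro k h1 h2
    have e1 := hocle i k le_rfl h1 h2
    have e2 := hocle k j h1 h2 le_rfl
    rw [← hgij] at e2
    exact le_antisymm e1 e2
  have hdec : ∀ k, i ≤ k → k < j →
      ∃ p t p' x, g k = PExpr.seq p t ∧ g (k + 1) = PExpr.seq p' t ∧ PStep p x p' := by
    intro k h1 h2
    obtain ⟨x, hx⟩ := hsteps k h1 h2
    have hoc : OC (g k) ≤ OC (g (k + 1)) := by
      rw [hoceq k h1 (le_of_lt h2), hoceq (k + 1) (le_trans h1 (Nat.le_succ k)) h2]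
    obtain ⟨p, t, p', e1, e2, hs⟩ :=
      step_structure (hGAB k h1 (le_of_lt h2)).2 (hnt k h1 (le_of_lt h2)) hx hoc
    exact ⟨p, t, p', x, e1, e2, hs⟩
  obtain ⟨p0, t0, p0', x0, hgi0, -, -⟩ := hdec i le_rfl hij
  have htail : ∀ k, i ≤ k → k ≤ j → ∃ h, g k = PExpr.seq h t0 := by
    intro k hik
    induction k, hik using Nat.le_induction with
    | base => intro _; exact ⟨p0, hgi0⟩
    | succ k hik ih =>
        intro hkj
        have hkj' : k < j := hkj
        obtain ⟨h, hk⟩ := ih (le_of_lt hkj')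
        obtain ⟨p, t, p', x, e1, e2, hs⟩ := hdec k hik hkj'
        rw [hk] at e1
        injection e1 with e1a e1b
        subst e1b
        exact ⟨p', e2⟩
  have hhd : ∀ k, i ≤ k → k ≤ j → g k = PExpr.seq (hd (g k)) t0 := by
    intro k h1 h2
    obtain ⟨h, hk⟩ := htail k h1 h2
    rw [hk]; rfl
  have hstep' : ∀ k, i ≤ k → k < j → ∃ x, PStep (hd (g k)) x (hd (g (k + 1))) := by
    intro k h1 h2
    obtain ⟨p, t, p', x, e1, e2, hs⟩ := hdec k h1 h2
    have e1' := hhd k h1 (le_of_lt h2)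
    have e2' := hhd (k + 1) (le_trans h1 (Nat.le_succ k)) h2
    rw [e1'] at e1; rw [e2'] at e2
    injection e1 with ea eb; injection e2 with ec ed
    exact ⟨x, by rw [ea, ec]; exact hs⟩
  have hNP : ∀ k, i ≤ k → k ≤ j → NoPar (hd (g k)) ∧ NoPar t0 := by
    intro k h1 h2
    have hnp := (hGAB k h1 h2).2
    rw [hhd k h1 h2] at hnp
    exact ⟨hnp.1, hnp.2⟩
  have hplug' : ∀ k, i ≤ k → k ≤ j → plug (hd (g k)) (t0 :: L) = plug (g k) L := by
    intro k h1 h2; rw [plug_cons, ← hhd k h1 h2]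
  by_cases hT : PTerm t0
  · -- `t0` can terminate: recurse on the heads.
    have hsz : sizeOf (hd (g i)) < N := by
      have e := hhd i le_rfl (le_of_lt hij)
      have hsz2 : sizeOf (g i) = 1 + sizeOf (hd (g i)) + sizeOf t0 := by
        conv_lhs => rw [e]
        simp
      omega
    have hgij' : hd (g i) = hd (g j) := by rw [hgij]
    have hL' : ∀ t ∈ t0 :: L, PTerm t ∧ NoPar t := by
      intro t ht
      rcases List.mem_cons.1 ht with rfl | ht
      · exact ⟨hT, (hNP i le_rfl (le_of_lt hij)).2⟩
      · exact hL t ht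
    have hGAB' : ∀ k, i ≤ k → k ≤ j →
        (GA a b c (plug (hd (g k)) (t0 :: L)) ∨ GB a b c (plug (hd (g k)) (t0 :: L))) ∧
          NoPar (hd (g k)) := by
      intro k h1 h2
      rw [hplug' k h1 h2]
      exact ⟨(hGAB k h1 h2).1, (hNP k h1 h2).1⟩
    exact IH (sizeOf (hd (g i))) hsz (fun k => hd (g k)) (t0 :: L) i j le_rfl hij hgij'
      hL' hstep' hGAB'
  · -- `t0` cannot terminate: derive a contradiction through the exit transitions.
    obtain ⟨x, hx⟩ := hsteps i le_rfl hij
    have hps : PStep (plug (g i) L) x (plug (g (i + 1)) L) := plug_step hx L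
    have hnt1 : ¬ PTerm (plug (g (i + 1)) L) := by
      rcases (hGAB (i + 1) (Nat.le_succ i) hij).1 with hA | hB
      · exact (GA_spec hA).1
      · exact (GB_spec hB).1
    obtain ⟨kA, kB, hkA1, hkA2, hkB1, hkB2, hGA, hGB⟩ :
        ∃ kA kB, i ≤ kA ∧ kA ≤ j ∧ i ≤ kB ∧ kB ≤ j ∧
          GA a b c (plug (g kA) L) ∧ GB a b c (plug (g kB) L) := by
      rcases (hGAB i le_rfl (le_of_lt hij)).1 with hA | hB
      · rcases (GA_spec hA).2.2.2 x _ hps with ⟨-, hGBnext⟩ | ⟨-, hC0⟩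
        · exact ⟨i, i + 1, le_rfl, le_of_lt hij, Nat.le_succ i, hij, hA, hGBnext⟩
        · exact absurd (GC0_spec hC0) hnt1
      · rcases (GB_spec hB).2.2.2 x _ hps with ⟨-, hGAnext⟩ | ⟨-, hC1⟩
        · exact ⟨i + 1, i, Nat.le_succ i, hij, le_rfl, le_of_lt hij, hGAnext, hB⟩
        · rcases (hGAB (i + 1) (Nat.le_succ i) hij).1 with hA' | hB'
          · obtain ⟨v, hv, -⟩ := (GA_spec hA').2.1
            exact absurd ((GC1_spec hC1).2.2 a v hv).1 hab
          · obtain ⟨v, hv, -⟩ := (GB_spec hB').2.2.1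
            exact (hbc (((GC1_spec hC1).2.2 c v hv).1).symm).elim
    -- The `GA` state exits with a terminating `c`-transition of the common tail `t0`.
    obtain ⟨v, hvc, hvC0⟩ := (GA_spec hGA).2.2.1
    obtain ⟨z, hz, rfl⟩ := plug_step_inv hLT (hnt kA hkA1 hkA2) hvc
    have hPz : PTerm z := ((plug_term_iff _ _).1 (GC0_spec hvC0)).1
    rw [hhd kA hkA1 hkA2] at hz
    obtain ⟨hter, hzc⟩ : PTerm (hd (g kA)) ∧ PStep t0 c z := by
      cases hz with
      | seql hs => exact absurd (term_seq_iff.1 hPz).2 hT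
      | seqr h1 h2 => exact ⟨h1, h2⟩
    -- The `GB` state has a non-terminating head.
    have hnpB : ¬ PTerm (hd (g kB)) := by
      intro hpb
      have hstep2 : PStep (g kB) c z := by
        rw [hhd kB hkB1 hkB2]; exact PStep.seqr hpb hzc
      have hps2 : PStep (plug (g kB) L) c (plug z L) := plug_step hstep2 L
      rcases (GB_spec hGB).2.2.2 c _ hps2 with ⟨hcb, -⟩ | ⟨-, hC1⟩
      · exact hbc hcb.symm
      · exact (GC1_spec hC1).1 ((plug_term_iff _ _).2 ⟨hPz, hLT⟩)
    obtain ⟨w, hwc, hwC1⟩ := (GB_spec hGB).2.2.1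
    obtain ⟨z', hz', rfl⟩ := plug_step_inv hLT (hnt kB hkB1 hkB2) hwc
    rw [hhd kB hkB1 hkB2] at hz'
    cases hz' with
    | seqr h1 h2 => exact hnpB h1
    | @seql _ _ h'' _ hs =>
        have hntz' : ¬ PTerm (PExpr.seq h'' t0) := by
          intro ht
          exact (GC1_spec hwC1).1 ((plug_term_iff _ _).2 ⟨ht, hLT⟩)
        have hnph'' : ¬ PTerm h'' := by
          intro htm
          have hstep3 : PStep (PExpr.seq h'' t0) c z := PStep.seqr htm hzc
          have hps3 := plug_step hstep3 L
          exact hbc (((GC1_spec hwC1).2.2 c _ hps3).1).symm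
        obtain ⟨w', hwb, hwC0⟩ := (GC1_spec hwC1).2.1
        obtain ⟨z2, hz2, rfl⟩ := plug_step_inv hLT hntz' hwb
        cases hz2 with
        | seqr h1 h2 => exact hnph'' h1
        | @seql _ _ h3 _ hs2 =>
            have hterm2 : PTerm (PExpr.seq h3 t0) :=
              ((plug_term_iff _ _).1 (GC0_spec hwC0)).1
            exact hT (term_seq_iff.1 hterm2).2

end Main

/-- BPA*01 is less expressive than PA*01 modulo bisimilarity:
every BPA*01 expression (PA*01 expression without `‖`) is bisimilar to a PA*01
expression, and the PA*01 expression `ε·(a·b)* ‖ c` (for distinct actions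
`a, b, c`) is not bisimilar to any BPA*01 expression. -/
theorem bpa_less_expressive_than_pa {Act : Type} (a b c : Act)
    (hab : a ≠ b) (hac : a ≠ c) (hbc : b ≠ c) :
    (∀ p : PExpr Act, NoPar p → ∃ q : PExpr Act, Bisimilar p q) ∧
    (∀ q : PExpr Act, NoPar q →
      ¬ Bisimilar
        (PExpr.par
          (PExpr.seq PExpr.emp (PExpr.star (PExpr.seq (PExpr.act a) (PExpr.act b))))
          (PExpr.act c))
        q) := by
  constructor
  · intro p _
    exact ⟨p, bisimilar_refl p⟩
  · intro q hq hbis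
    have hGAq : GA a b c q := bisimilar_symm hbis
    have hnext : ∀ u : PExpr Act, ((GA a b c u ∨ GB a b c u) ∧ NoPar u) →
        ∃ v, (∃ x, PStep u x v) ∧ ((GA a b c v ∨ GB a b c v) ∧ NoPar v) := by
      rintro u ⟨hgab, hnp⟩
      rcases hgab with hA | hB
      · obtain ⟨v, hv, hGBv⟩ := (GA_spec hA).2.1
        exact ⟨v, ⟨a, hv⟩, Or.inr hGBv, nopar_step hv hnp⟩
      · obtain ⟨v, hv, hGAv⟩ := (GB_spec hB).2.1
        exact ⟨v, ⟨b, hv⟩, Or.inl hGAv, nopar_step hv hnp⟩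
    obtain ⟨f, hf0, hf⟩ := exists_chain (fun u => (GA a b c u ∨ GB a b c u) ∧ NoPar u)
      (fun u v => ∃ x, PStep u x v) hnext q ⟨Or.inl hGAq, hq⟩
    have hmem : ∀ n, f n ∈ Gam q := by
      intro n
      induction n with
      | zero => rw [hf0]; exact mem_Gam_self q
      | succ n ih =>
          obtain ⟨x, hx⟩ := (hf n).2
          exact Gam_closed q (f n) ih x _ hx
    have hfin : (Set.range f).Finite :=
      (Gam_finite q).subset (by rintro v ⟨n, rfl⟩; exact hmem n)
    have hninj : ¬ Function.Injective f :=
      fun hinj => (Set.infinite_range_of_injective hinj) hfin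
    obtain ⟨m, n, hmn, hne⟩ : ∃ m n, f m = f n ∧ m ≠ n := by
      by_contra hcon
      push_neg at hcon
      exact hninj fun m n he => hcon m n he
    obtain ⟨i, j, hij, hfij⟩ : ∃ i j, i < j ∧ f i = f j := by
      rcases lt_or_gt_of_ne hne with h | h
      · exact ⟨m, n, h, hmn⟩
      · exact ⟨n, m, h, hmn.symm⟩
    exact no_cycle hab hbc (sizeOf (f i)) f [] i j le_rfl hij hfij (by simp)
      (fun k _ _ => (hf k).2)
      (fun k _ _ => ⟨by rw [plug_nil]; exact (hf k).1.1, (hf k).1.2⟩)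
end

section
/- If p and p' are PA*01 expressions such that p →⁺ p', then OC(p) ≥ OC(p'). Moreover, if OC(p) = OC(p'), then either p = p₁·q and p' = p₁'·q, or p = p₁‖p₂ and p' = p₁'‖p₂', for some PA*01 expressions p₁, p₂, p₁', p₂' and q. -/
variable {Act : Type}

lemma star_step_shape {r : PExpr Act} {a : Act} {t : PExpr Act}
    (h : PStep (PExpr.star r) a t) : ∃ r', t = PExpr.seq r' (PExpr.star r) := by
  cases h with
  | star h => exact ⟨_, rfl⟩

lemma step_OC {p p' : PExpr Act} {a : Act} (h : PStep p a p') :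
    OC p' ≤ OC p ∧ (OC p = OC p' →
      (∃ p₁ p₁' q : PExpr Act, p = PExpr.seq p₁ q ∧ p' = PExpr.seq p₁' q) ∨
      (∃ p₁ p₂ p₁' p₂' : PExpr Act,
        p = PExpr.par p₁ p₂ ∧ p' = PExpr.par p₁' p₂')) := by
  induction h with
  | act => simp [OC]
  | @altl p q p' a h ih =>
      have h1 := ih.1
      have : OC p ≤ max (OC p) (OC q) := le_max_left _ _
      constructor
      · simp only [OC]; omega
      · intro heq; exfalso; simp only [OC] at heq; omega
  | @altr p q q' a h ih =>
      have h1 := ih.1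
      have : OC q ≤ max (OC p) (OC q) := le_max_right _ _
      constructor
      · simp only [OC]; omega
      · intro heq; exfalso; simp only [OC] at heq; omega
  | @seql p q p' a h ih =>
      constructor
      · simp only [OC]; exact le_refl _
      · intro _; exact Or.inl ⟨p, p', q, rfl, rfl⟩
  | @seqr p q q' a hp h ih =>
      have h1 := ih.1
      by_cases hq : isStarP q
      · have hstar : ∃ r, q = PExpr.star r := by
          cases q <;> simp [isStarP] at hq ⊢
        obtain ⟨r, rfl⟩ := hstar
        obtain ⟨r', rfl⟩ := star_step_shape h
        constructor
        · simp [OC, isStarP]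
        · intro _; exact Or.inl ⟨p, r', PExpr.star r, rfl, rfl⟩
      · have hOC : OC (PExpr.seq p q) = OC q + 1 := by
          simp only [OC, if_neg hq]
        refine ⟨by omega, fun heq => absurd heq (by omega)⟩
  | @star p p' a h ih =>
      constructor
      · simp [OC, isStarP]
      · intro heq; exfalso; simp [OC, isStarP] at heq
  | @parl p q p' a h ih =>
      exact ⟨le_refl _, fun _ => Or.inr ⟨p, q, p', q, rfl, rfl⟩⟩
  | @parr p q q' a h ih =>
      exact ⟨le_refl _, fun _ => Or.inr ⟨p, q, p, q', rfl, rfl⟩⟩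

lemma stepAny_OC {p p' : PExpr Act} (h : PStepAny p p') :
    OC p' ≤ OC p ∧ (OC p = OC p' →
      (∃ p₁ p₁' q : PExpr Act, p = PExpr.seq p₁ q ∧ p' = PExpr.seq p₁' q) ∨
      (∃ p₁ p₂ p₁' p₂' : PExpr Act,
        p = PExpr.par p₁ p₂ ∧ p' = PExpr.par p₁' p₂')) := by
  obtain ⟨a, h⟩ := h; exact step_OC h

/-- If `p →⁺ p'` in PA*01, then `OC p ≥ OC p'`; moreover, if
`OC p = OC p'`, then either `p = p₁ · q` and `p' = p₁' · q`, or `p = p₁ ‖ p₂`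
and `p' = p₁' ‖ p₂'`. -/
theorem OC_monotonic_pa {Act : Type} [Nonempty Act] {p p' : PExpr Act}
    (h : Relation.TransGen PStepAny p p') :
    OC p' ≤ OC p ∧
      (OC p = OC p' →
        (∃ p₁ p₁' q : PExpr Act, p = PExpr.seq p₁ q ∧ p' = PExpr.seq p₁' q) ∨
        (∃ p₁ p₂ p₁' p₂' : PExpr Act,
          p = PExpr.par p₁ p₂ ∧ p' = PExpr.par p₁' p₂')) := by
  induction h with
  | single h => exact stepAny_OC h
  | tail hpq hstep ih =>
      rename_i q p'
      have hs := stepAny_OC hstep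
      refine ⟨le_trans hs.1 ih.1, ?_⟩
      intro heq
      have h1 : OC p = OC q := le_antisymm (by omega) ih.1
      have h2 : OC q = OC p' := by omega
      rcases ih.2 h1 with ⟨p₁, p₁', q₀, hp, hq⟩ | ⟨p₁, p₂, p₁', p₂', hp, hq⟩ <;>
        rcases hs.2 h2 with ⟨r₁, r₁', r₀, hq', hp'⟩ | ⟨r₁, r₂, r₁', r₂', hq', hp'⟩ <;>
        subst hp <;> subst hp' <;> rw [hq'] at hq
      · obtain ⟨h7, h8⟩ := PExpr.seq.inj hq
        exact Or.inl ⟨p₁, r₁', q₀, rfl, by rw [h8]⟩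
      · exact absurd hq (by simp)
      · exact absurd hq (by simp)
      · exact Or.inr ⟨p₁, p₂, r₁', r₂', rfl, rfl⟩
end

section
/- If C is a non-trivial strongly connected component in PA*01, then either there exist a set of PA*01 expressions C' and a PA*01 expression q such that C = C'·q, or there exist strongly connected components C₁ and C₂ in PA*01, at least one of them non-trivial, such that C = C₁‖C₂. -/
variable {Act : Type}

section AuxSCC

lemma isStar_exists {q : PExpr Act} (h : isStarP q = true) : ∃ x, q = PExpr.star x := by
  cases q <;> simp_all [isStarP]

lemma star_step {x : PExpr Act} {a : Act} {t : PExpr Act}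
    (h : PStep (PExpr.star x) a t) : ∃ x', t = PExpr.seq x' (PExpr.star x) := by
  cases h; exact ⟨_, rfl⟩

lemma oc_step {s t : PExpr Act} {a : Act} (h : PStep s a t) : OC t ≤ OC s := by
  induction h with
  | act => simp [OC]
  | altl h ih => simp only [OC]; omega
  | altr h ih => simp only [OC]; omega
  | seql h ih => simp [OC]
  | @seqr p q q' a hp h ih =>
      by_cases hq : isStarP q = true
      · obtain ⟨x, rfl⟩ := isStar_exists hq
        obtain ⟨x', rfl⟩ := star_step h
        simp [OC, isStarP]
      · simp only [OC, if_neg hq]; omega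
  | star h ih => simp [OC, isStarP]
  | parl h ih => simp [OC]
  | parr h ih => simp [OC]

lemma oc_reach {s t : PExpr Act} (h : PReach s t) : OC t ≤ OC s := by
  induction h with
  | refl => exact le_rfl
  | tail hab hbc ih => obtain ⟨a, h⟩ := hbc; exact (oc_step h).trans ih

lemma step_shape {s t : PExpr Act} {a : Act} (h : PStep s a t) :
    t = PExpr.emp ∨ (∃ u v, t = PExpr.seq u v) ∨ (∃ u v, t = PExpr.par u v) := by
  induction h with
  | act => exact Or.inl rfl
  | altl h ih => exact ih
  | altr h ih => exact ih
  | seql h ih => exact Or.inr (Or.inl ⟨_, _, rfl⟩)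
  | seqr hp h ih => exact ih
  | star h ih => exact Or.inr (Or.inl ⟨_, _, rfl⟩)
  | parl h ih => exact Or.inr (Or.inr ⟨_, _, rfl⟩)
  | parr h ih => exact Or.inr (Or.inr ⟨_, _, rfl⟩)

lemma mem_scc_between {C : Set (PExpr Act)} (hC : IsSCC C) {s m t : PExpr Act}
    (hs : s ∈ C) (ht : t ∈ C) (h1 : PReach s m) (h2 : PReach m t) : m ∈ C := by
  have hD : ∀ x ∈ insert m C, ∀ y ∈ insert m C, PReach x y := by
    intro x hx y hy
    rcases Set.mem_insert_iff.1 hx with rfl | hx'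
    · rcases Set.mem_insert_iff.1 hy with rfl | hy'
      · exact Relation.ReflTransGen.refl
      · exact h2.trans (hC.1 t ht y hy')
    · rcases Set.mem_insert_iff.1 hy with rfl | hy'
      · exact (hC.1 x hx' s hs).trans h1
      · exact hC.1 x hx' y hy'
  have := hC.2 (insert m C) (Set.subset_insert _ _) hD
  rw [← this]; exact Set.mem_insert _ _

lemma scc_nonempty {C : Set (PExpr Act)} (hC : IsSCC C) : C.Nonempty := by
  by_contra h
  rw [Set.not_nonempty_iff_eq_empty] at h
  subst h
  have := hC.2 {PExpr.emp} (Set.empty_subset _) (by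
    intro x hx y hy
    rcases hx with rfl; rcases hy with rfl
    exact Relation.ReflTransGen.refl)
  simp at this

lemma exists_step_out {C : Set (PExpr Act)} (hC : IsSCC C) (hnt : ¬ IsTrivialSCC C)
    {t : PExpr Act} (ht : t ∈ C) : ∃ a u, PStep t a u := by
  by_cases h : ∃ u ∈ C, u ≠ t
  · obtain ⟨u, hu, hne⟩ := h
    rcases (hC.1 t ht u hu).cases_head with rfl | ⟨m, ⟨a, hm⟩, _⟩
    · exact absurd rfl hne
    · exact ⟨a, m, hm⟩
  · push_neg at h
    have hCt : C = {t} := by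
      apply Set.eq_singleton_iff_unique_mem.2 ⟨ht, fun x hx => h x hx⟩
    have : PStepAny t t := by
      by_contra hno
      exact hnt ⟨t, hCt, hno⟩
    obtain ⟨a, h'⟩ := this
    exact ⟨a, t, h'⟩

lemma exists_step_into {C : Set (PExpr Act)} (hC : IsSCC C) (hnt : ¬ IsTrivialSCC C)
    {t : PExpr Act} (ht : t ∈ C) : ∃ s a, PStep s a t := by
  by_cases h : ∃ u ∈ C, u ≠ t
  · obtain ⟨u, hu, hne⟩ := h
    rcases (hC.1 u hu t ht).cases_tail with rfl | ⟨m, _, ⟨a, hm⟩⟩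
    · exact absurd rfl hne
    · exact ⟨m, a, hm⟩
  · push_neg at h
    have hCt : C = {t} := Set.eq_singleton_iff_unique_mem.2 ⟨ht, fun x hx => h x hx⟩
    have : PStepAny t t := by
      by_contra hno
      exact hnt ⟨t, hCt, hno⟩
    obtain ⟨a, h'⟩ := this
    exact ⟨t, a, h'⟩

lemma step_in_scc_seq {C : Set (PExpr Act)} (hC : IsSCC C) {p q t : PExpr Act} {a : Act}
    (hs : PExpr.seq p q ∈ C) (ht : t ∈ C) (h : PStep (PExpr.seq p q) a t) :
    ∃ p', t = PExpr.seq p' q := by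
  cases h with
  | seql h => exact ⟨_, rfl⟩
  | seqr hp h =>
      by_cases hq : isStarP q = true
      · obtain ⟨x, rfl⟩ := isStar_exists hq
        exact star_step h
      · exfalso
        have h1 : OC t ≤ OC q := oc_step h
        have h2 : OC (PExpr.seq p q) ≤ OC t := oc_reach (hC.1 t ht _ hs)
        simp only [OC, if_neg hq] at h2
        omega

lemma reach_seq_tail {C : Set (PExpr Act)} (hC : IsSCC C) {p₀ q₀ t : PExpr Act}
    (hs : PExpr.seq p₀ q₀ ∈ C) (hr : PReach (PExpr.seq p₀ q₀) t) (ht : t ∈ C) :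
    ∃ p, t = PExpr.seq p q₀ := by
  induction hr with
  | refl => exact ⟨p₀, rfl⟩
  | @tail b c hab hbc ih =>
      have hb : b ∈ C :=
        mem_scc_between hC hs ht hab (Relation.ReflTransGen.single hbc)
      obtain ⟨p, rfl⟩ := ih hb
      obtain ⟨a, hstep⟩ := hbc
      exact step_in_scc_seq hC hb ht hstep

lemma par_reach {p q t : PExpr Act} (h : PReach (PExpr.par p q) t) :
    ∃ p' q', t = PExpr.par p' q' ∧ PReach p p' ∧ PReach q q' := by
  induction h with
  | refl => exact ⟨p, q, rfl, Relation.ReflTransGen.refl, Relation.ReflTransGen.refl⟩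
  | @tail b c hab hbc ih =>
      obtain ⟨p', q', rfl, hp, hq⟩ := ih
      obtain ⟨a, hstep⟩ := hbc
      cases hstep with
      | parl h => exact ⟨_, _, rfl, hp.tail ⟨_, h⟩, hq⟩
      | parr h => exact ⟨_, _, rfl, hp, hq.tail ⟨_, h⟩⟩

lemma par_reach_left {p p' : PExpr Act} (q : PExpr Act) (h : PReach p p') :
    PReach (PExpr.par p q) (PExpr.par p' q) :=
  Relation.ReflTransGen.lift (fun x => PExpr.par x q)
    (fun _ _ ⟨a, h⟩ => ⟨a, PStep.parl h⟩) _ _ h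

lemma par_reach_right (p : PExpr Act) {q q' : PExpr Act} (h : PReach q q') :
    PReach (PExpr.par p q) (PExpr.par p q') :=
  Relation.ReflTransGen.lift (fun x => PExpr.par p x)
    (fun _ _ ⟨a, h⟩ => ⟨a, PStep.parr h⟩) _ _ h

/-- The SCC of an expression. -/
def sccOf (p : PExpr Act) : Set (PExpr Act) := {r | PReach p r ∧ PReach r p}

lemma mem_sccOf_self (p : PExpr Act) : p ∈ sccOf p :=
  ⟨Relation.ReflTransGen.refl, Relation.ReflTransGen.refl⟩

lemma isSCC_sccOf (p : PExpr Act) : IsSCC (sccOf p) := by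
  constructor
  · rintro s ⟨hps, hsp⟩ t ⟨hpt, htp⟩
    exact hsp.trans hpt
  · intro D hsub hmut
    apply Set.Subset.antisymm _ hsub
    intro d hd
    exact ⟨hmut p (hsub (mem_sccOf_self p)) d hd, hmut d hd p (hsub (mem_sccOf_self p))⟩

end AuxSCC

/-- Every non-trivial SCC in PA*01 is either of the form `C' · q`,
or of the form `C₁ ‖ C₂` for SCCs `C₁` and `C₂`, at least one of them
non-trivial. -/
theorem scc_seq_par {Act : Type} [Nonempty Act] {C : Set (PExpr Act)}
    (hC : IsSCC C) (hnt : ¬ IsTrivialSCC C) :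
    (∃ (C' : Set (PExpr Act)) (q : PExpr Act), C = seqSet C' q) ∨
    (∃ C₁ C₂ : Set (PExpr Act), IsSCC C₁ ∧ IsSCC C₂ ∧
      (¬ IsTrivialSCC C₁ ∨ ¬ IsTrivialSCC C₂) ∧ C = parSet C₁ C₂) := by
  obtain ⟨t₀, ht₀⟩ := scc_nonempty hC
  obtain ⟨s, a, hin⟩ := exists_step_into hC hnt ht₀
  rcases step_shape hin with rfl | ⟨p, q, rfl⟩ | ⟨p, q, rfl⟩
  · -- t₀ = emp : impossible, emp has no outgoing step
    obtain ⟨b, u, hout⟩ := exists_step_out hC hnt ht₀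
    cases hout
  · -- seq case
    left
    refine ⟨{p' | PExpr.seq p' q ∈ C}, q, ?_⟩
    apply Set.eq_of_subset_of_subset
    · intro t ht
      obtain ⟨p', rfl⟩ := reach_seq_tail hC ht₀ (hC.1 _ ht₀ t ht) ht
      exact ⟨p', ht, rfl⟩
    · rintro t ⟨p', hp', rfl⟩
      exact hp'
  · -- par case
    right
    refine ⟨sccOf p, sccOf q, isSCC_sccOf p, isSCC_sccOf q, ?_, ?_⟩
    case refine_2 =>
      apply Set.eq_of_subset_of_subset
      · intro t ht
        obtain ⟨p', q', rfl, hp, hq⟩ := par_reach (hC.1 _ ht₀ t ht)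
        obtain ⟨p'', q'', heq, hp', hq'⟩ := par_reach (hC.1 _ ht _ ht₀)
        obtain ⟨rfl, rfl⟩ := PExpr.par.inj heq
        exact Set.mem_image2_of_mem ⟨hp, hp'⟩ ⟨hq, hq'⟩
      · rintro t ht
        rw [parSet, Set.mem_image2] at ht
        obtain ⟨r, ⟨hpr, hrp⟩, u, ⟨hqu, huq⟩, rfl⟩ := ht
        exact mem_scc_between hC ht₀ ht₀
          ((par_reach_left q hpr).trans (par_reach_right r hqu))
          ((par_reach_left u hrp).trans (par_reach_right p huq))
    case refine_1 =>
      by_contra hboth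
      push_neg at hboth
      obtain ⟨h1, h2⟩ := hboth
      obtain ⟨r₀, hr₀, hr₀s⟩ := h1
      obtain ⟨s₀, hs₀, hs₀s⟩ := h2
      have hpr : p = r₀ := by
        have := mem_sccOf_self p; rw [hr₀] at this; exact this
      have hqs : q = s₀ := by
        have := mem_sccOf_self q; rw [hs₀] at this; exact this
      subst hpr; subst hqs
      apply hnt
      refine ⟨PExpr.par p q, ?_, ?_⟩
      · apply Set.eq_singleton_iff_unique_mem.2 ⟨ht₀, ?_⟩
        intro x hx
        obtain ⟨r', q', rfl, hp1, hp2⟩ := par_reach (hC.1 _ ht₀ x hx)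
        obtain ⟨p'', q'', heq, hp', hq'⟩ := par_reach (hC.1 _ hx _ ht₀)
        obtain ⟨rfl, rfl⟩ := PExpr.par.inj heq
        have hr' : r' ∈ sccOf p := ⟨hp1, hp'⟩
        have hq' : q' ∈ sccOf q := ⟨hp2, hq'⟩
        rw [hr₀] at hr'; rw [hs₀] at hq'
        rcases hr' with rfl; rcases hq' with rfl
        rfl
      · rintro ⟨b, hstep⟩
        cases hstep with
        | parl h => exact hr₀s ⟨_, h⟩
        | parr h => exact hs₀s ⟨_, h⟩
end

section
/- Let p and q be PA*01 expressions, let r be a PA*01 expression, and let a and b be actions. If (a,p) ∼ (b,q), then (a,p·r) ∼ (b,q·r), (a,p‖r) ∼ (b,q‖r), and (a,r‖p) ∼ (b,r‖q). -/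
variable {Act : Type}

lemma reach_seql {p q r : PExpr Act} (h : PReach p q) :
    PReach (PExpr.seq p r) (PExpr.seq q r) := by
  induction h with
  | refl => exact Relation.ReflTransGen.refl
  | tail _ hstep ih =>
      obtain ⟨a, ha⟩ := hstep
      exact ih.tail ⟨a, PStep.seql ha⟩

lemma reach_parl {p q r : PExpr Act} (h : PReach p q) :
    PReach (PExpr.par p r) (PExpr.par q r) := by
  induction h with
  | refl => exact Relation.ReflTransGen.refl
  | tail _ hstep ih =>
      obtain ⟨a, ha⟩ := hstep
      exact ih.tail ⟨a, PStep.parl ha⟩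

lemma reach_parr {p q r : PExpr Act} (h : PReach p q) :
    PReach (PExpr.par r p) (PExpr.par r q) := by
  induction h with
  | refl => exact Relation.ReflTransGen.refl
  | tail _ hstep ih =>
      obtain ⟨a, ha⟩ := hstep
      exact ih.tail ⟨a, PStep.parr ha⟩

lemma sameSCC_of_mutual {s t : PExpr Act} (hst : PReach s t) (hts : PReach t s) :
    SameSCC s t := by
  refine ⟨{u | PReach s u ∧ PReach u s}, ⟨?_, ?_⟩, ⟨Relation.ReflTransGen.refl,
    Relation.ReflTransGen.refl⟩, ⟨hst, hts⟩⟩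
  · intro x hx y hy
    exact hx.2.trans hy.1
  · intro D hsub hD
    apply Set.eq_of_subset_of_subset
    · intro u hu
      have hs : s ∈ D := hsub ⟨Relation.ReflTransGen.refl, Relation.ReflTransGen.refl⟩
      exact ⟨hD s hs u hu, hD u hu s hs⟩
    · exact hsub

/-- The equivalence `∼` on exit transitions is compatible with
sequential and parallel composition: if `(a,p) ∼ (b,q)` then
`(a,p·r) ∼ (b,q·r)`, `(a,p‖r) ∼ (b,q‖r)` and `(a,r‖p) ∼ (b,r‖q)`. -/
theorem exit_equiv_compatible {Act : Type} [Nonempty Act]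
    (p q r : PExpr Act) (a b : Act) (h : ExitEquiv (a, p) (b, q)) :
    ExitEquiv (a, PExpr.seq p r) (b, PExpr.seq q r) ∧
    ExitEquiv (a, PExpr.par p r) (b, PExpr.par q r) ∧
    ExitEquiv (a, PExpr.par r p) (b, PExpr.par r q) := by
  obtain ⟨hab, C, hC, hp, hq⟩ := h
  have hpq : PReach p q := hC.1 p hp q hq
  have hqp : PReach q p := hC.1 q hq p hp
  exact ⟨⟨hab, sameSCC_of_mutual (reach_seql hpq) (reach_seql hqp)⟩,
    ⟨hab, sameSCC_of_mutual (reach_parl hpq) (reach_parl hqp)⟩,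
    ⟨hab, sameSCC_of_mutual (reach_parr hpq) (reach_parr hqp)⟩⟩
end
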